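/- Steiner's theorem on isogonal cevians: Let A, B, C be affinely independent points in the Euclidean plane, and let A₁ and A₂ be points strictly between B and C such that ∠ B A A₁ = ∠ C A A₂ (i.e., the cevians AA₁ and AA₂ are isogonal with respect to the angle at A). Then (dist A₁ B / dist A₁ C) · (dist A₂ B / dist A₂ C) = (dist A B / dist A C)². -/

import Mathlib

open EuclideanGeometry

local notation "⟪" x ", " y "⟫" => @inner ℝ _ _ x y

private lemma lagrange2 (u w : EuclideanSpace ℝ (Fin 2)) :
    ⟪u, u⟫ * ⟪w, w⟫ - ⟪u, w⟫ * ⟪u, w⟫ = (u 0 * w 1 - u 1 * w 0) ^ 2 := by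
  simp only [PiLp.inner_apply, RCLike.inner_apply, Fin.sum_univ_two, conj_trivial]
  ring

/-- **Steiner's theorem on isogonal cevians.** If `A₁`, `A₂` lie strictly between `B` and `C`
and the cevians `AA₁`, `AA₂` are isogonal with respect to the angle at `A`
(`∠ B A A₁ = ∠ C A A₂`), then
`(A₁B / A₁C) * (A₂B / A₂C) = (AB / AC)²`. -/
theorem steiner_isogonal_cevians (A B C A₁ A₂ : EuclideanSpace ℝ (Fin 2))
    (hABC : AffineIndependent ℝ ![A, B, C])
    (hA₁ : Sbtw ℝ B A₁ C) (hA₂ : Sbtw ℝ B A₂ C)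
    (hiso : ∠ B A A₁ = ∠ C A A₂) :
    (dist A₁ B / dist A₁ C) * (dist A₂ B / dist A₂ C) = (dist A B / dist A C) ^ 2 := by
  have hncol : ¬ Collinear ℝ ({A, B, C} : Set (EuclideanSpace ℝ (Fin 2))) :=
    affineIndependent_iff_not_collinear_set.mp hABC
  obtain ⟨⟨t₁, ht₁, rfl⟩, hBC⟩ := sbtw_iff_mem_image_Ioo_and_ne.mp hA₁
  obtain ⟨⟨t₂, ht₂, rfl⟩, -⟩ := sbtw_iff_mem_image_Ioo_and_ne.mp hA₂
  have hAB : A ≠ B := by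
    have := hABC.injective.ne (show (0 : Fin 3) ≠ 1 by decide)
    simpa using this
  have hAC : A ≠ C := by
    have := hABC.injective.ne (show (0 : Fin 3) ≠ 2 by decide)
    simpa using this
  set b : EuclideanSpace ℝ (Fin 2) := B -ᵥ A with hb
  set c : EuclideanSpace ℝ (Fin 2) := C -ᵥ A with hc
  set v₁ : EuclideanSpace ℝ (Fin 2) := AffineMap.lineMap B C t₁ -ᵥ A with hv₁def
  set v₂ : EuclideanSpace ℝ (Fin 2) := AffineMap.lineMap B C t₂ -ᵥ A with hv₂def
  have hv₁ : v₁ = (1 - t₁) • b + t₁ • c := by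
    simp only [hv₁def, hb, hc, AffineMap.lineMap_apply, vsub_eq_sub, vadd_eq_add]
    module
  have hv₂ : v₂ = (1 - t₂) • b + t₂ • c := by
    simp only [hv₂def, hb, hc, AffineMap.lineMap_apply, vsub_eq_sub, vadd_eq_add]
    module
  -- nonvanishing
  have hbne : b ≠ 0 := by simp [hb, vsub_eq_sub, sub_eq_zero, Ne, eq_comm, hAB]
  have hcne : c ≠ 0 := by simp [hc, vsub_eq_sub, sub_eq_zero, Ne, eq_comm, hAC]
  have hAA₁ : AffineMap.lineMap B C t₁ ≠ A := by
    intro h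
    exact hncol (collinear_insert_of_mem_affineSpan_pair
      (h ▸ AffineMap.lineMap_mem_affineSpan_pair t₁ B C))
  have hAA₂ : AffineMap.lineMap B C t₂ ≠ A := by
    intro h
    exact hncol (collinear_insert_of_mem_affineSpan_pair
      (h ▸ AffineMap.lineMap_mem_affineSpan_pair t₂ B C))
  have hv₁ne : v₁ ≠ 0 := by simp [hv₁def, vsub_eq_sub, sub_eq_zero, hAA₁]
  have hv₂ne : v₂ ≠ 0 := by simp [hv₂def, vsub_eq_sub, sub_eq_zero, hAA₂]
  set k : ℝ := b 0 * c 1 - b 1 * c 0 with hk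
  have hkne : k ≠ 0 := by
    intro h0
    apply hncol
    rw [collinear_iff_of_mem (Set.mem_insert A _)]
    refine ⟨b, ?_⟩
    rintro p (rfl | rfl | rfl)
    · exact ⟨0, by simp⟩
    · exact ⟨1, by simp [hb, vsub_eq_sub, vadd_eq_add]⟩
    · by_cases hb0 : b 0 = 0
      · have hb1 : b 1 ≠ 0 := by
          intro hb1
          apply hbne
          ext i
          fin_cases i <;> simp [hb0, hb1]
        refine ⟨c 1 / b 1, ?_⟩
        have hc0 : c 0 = 0 := by
          have : b 0 * c 1 - b 1 * c 0 = 0 := h0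
          rw [hb0] at this
          have h' : b 1 * c 0 = 0 := by linarith
          exact (mul_eq_zero.mp h').resolve_left hb1
        have hcc : c = (c 1 / b 1) • b := by
          ext i
          fin_cases i <;> simp [hb0, hc0] <;> field_simp
        rw [eq_vadd_iff_vsub_eq]
        exact hcc
      · refine ⟨c 0 / b 0, ?_⟩
        have hcc : c = (c 0 / b 0) • b := by
          ext i
          fin_cases i
          · show c 0 = ((c 0 / b 0) • b) 0
            simp only [PiLp.smul_apply, smul_eq_mul]
            field_simp
          · have hk2 : b 0 * c 1 = b 1 * c 0 := by
              have := h0.symm ▸ hk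
              linarith [hk ▸ h0]
            show c 1 = ((c 0 / b 0) • b) 1
            simp only [PiLp.smul_apply, smul_eq_mul]
            field_simp
            linarith [hk2]
        rw [eq_vadd_iff_vsub_eq]
        exact hcc
  -- coordinates of v₁, v₂
  have hv₁0 : v₁ 0 = (1 - t₁) * b 0 + t₁ * c 0 := by rw [hv₁]; simp
  have hv₁1 : v₁ 1 = (1 - t₁) * b 1 + t₁ * c 1 := by rw [hv₁]; simp
  have hv₂0 : v₂ 0 = (1 - t₂) * b 0 + t₂ * c 0 := by rw [hv₂]; simp
  have hv₂1 : v₂ 1 = (1 - t₂) * b 1 + t₂ * c 1 := by rw [hv₂]; simp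
  -- the two angles as vector angles
  have hang1 : ∠ B A (AffineMap.lineMap B C t₁) = InnerProductGeometry.angle b v₁ := rfl
  have hang2 : ∠ C A (AffineMap.lineMap B C t₂) = InnerProductGeometry.angle c v₂ := rfl
  -- sine relation
  have hsin := congrArg Real.sin hiso
  rw [hang1, hang2] at hsin
  have hX₁ : ⟪b, b⟫ * ⟪v₁, v₁⟫ - ⟪b, v₁⟫ * ⟪b, v₁⟫ = (t₁ * k) ^ 2 := by
    rw [lagrange2, hv₁0, hv₁1, hk]; ring
  have hX₂ : ⟪c, c⟫ * ⟪v₂, v₂⟫ - ⟪c, v₂⟫ * ⟪c, v₂⟫ = ((1 - t₂) * k) ^ 2 := by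
    rw [lagrange2, hv₂0, hv₂1, hk]; ring
  have hs1 : Real.sin (InnerProductGeometry.angle b v₁) * (‖b‖ * ‖v₁‖) = t₁ * |k| := by
    rw [InnerProductGeometry.sin_angle_mul_norm_mul_norm, hX₁, Real.sqrt_sq_eq_abs, abs_mul,
      abs_of_pos ht₁.1]
  have hs2 : Real.sin (InnerProductGeometry.angle c v₂) * (‖c‖ * ‖v₂‖) = (1 - t₂) * |k| := by
    rw [InnerProductGeometry.sin_angle_mul_norm_mul_norm, hX₂, Real.sqrt_sq_eq_abs, abs_mul,
      abs_of_pos (by linarith [ht₂.2] : (0:ℝ) < 1 - t₂)]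
  -- cosine relation
  have hcos := congrArg Real.cos hiso
  rw [hang1, hang2] at hcos
  have hc1 : Real.cos (InnerProductGeometry.angle b v₁) * (‖b‖ * ‖v₁‖) = ⟪b, v₁⟫ :=
    InnerProductGeometry.cos_angle_mul_norm_mul_norm b v₁
  have hc2 : Real.cos (InnerProductGeometry.angle c v₂) * (‖c‖ * ‖v₂‖) = ⟪c, v₂⟫ :=
    InnerProductGeometry.cos_angle_mul_norm_mul_norm c v₂
  -- inner product values
  set p : ℝ := ⟪b, c⟫ with hp
  have hibv₁ : ⟪b, v₁⟫ = (1 - t₁) * ‖b‖ ^ 2 + t₁ * p := by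
    rw [hv₁, inner_add_right, real_inner_smul_right, real_inner_smul_right,
      real_inner_self_eq_norm_sq]
  have hicv₂ : ⟪c, v₂⟫ = (1 - t₂) * p + t₂ * ‖c‖ ^ 2 := by
    rw [hv₂, inner_add_right, real_inner_smul_right, real_inner_smul_right,
      real_inner_self_eq_norm_sq, real_inner_comm]
  -- combined relations
  have hS : t₁ * |k| * (‖c‖ * ‖v₂‖) = (1 - t₂) * |k| * (‖b‖ * ‖v₁‖) := by
    rw [← hs1, ← hs2, hsin]; ring
  have habs : |k| ≠ 0 := abs_ne_zero.mpr hkne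
  have hS' : t₁ * (‖c‖ * ‖v₂‖) = (1 - t₂) * (‖b‖ * ‖v₁‖) :=
    mul_right_cancel₀ habs (by linear_combination hS)
  have hC' : ((1 - t₁) * ‖b‖ ^ 2 + t₁ * p) * (‖c‖ * ‖v₂‖)
      = ((1 - t₂) * p + t₂ * ‖c‖ ^ 2) * (‖b‖ * ‖v₁‖) := by
    rw [← hibv₁, ← hicv₂, ← hc1, ← hc2, hcos]; ring
  have hcpos : (0:ℝ) < ‖c‖ := norm_pos_iff.mpr hcne
  have hv₂pos : (0:ℝ) < ‖v₂‖ := norm_pos_iff.mpr hv₂ne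
  have hbpos : (0:ℝ) < ‖b‖ := norm_pos_iff.mpr hbne
  have hv₁pos : (0:ℝ) < ‖v₁‖ := norm_pos_iff.mpr hv₁ne
  have hncn₂ : (0:ℝ) < ‖c‖ * ‖v₂‖ := mul_pos hcpos hv₂pos
  -- the key algebraic identity
  have hkey : t₁ * t₂ * ‖c‖ ^ 2 = (1 - t₁) * (1 - t₂) * ‖b‖ ^ 2 := by
    have h6 : (‖c‖ * ‖v₂‖) * ((1 - t₂) * ((1 - t₁) * ‖b‖ ^ 2 + t₁ * p))
        = (‖c‖ * ‖v₂‖) * (t₁ * ((1 - t₂) * p + t₂ * ‖c‖ ^ 2)) := by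
      linear_combination (1 - t₂) * hC' - ((1 - t₂) * p + t₂ * ‖c‖ ^ 2) * hS'
    have h7 := mul_left_cancel₀ (ne_of_gt hncn₂) h6
    linear_combination -h7
  -- rewrite distances
  have hdBC : (0:ℝ) < dist B C := dist_pos.mpr hBC
  have hdb : dist A B = ‖b‖ := by rw [hb, dist_eq_norm, vsub_eq_sub, ← norm_neg]; congr 1; abel
  have hdc : dist A C = ‖c‖ := by rw [hc, dist_eq_norm, vsub_eq_sub, ← norm_neg]; congr 1; abel
  rw [dist_lineMap_left, dist_lineMap_right,
    dist_lineMap_left, dist_lineMap_right, hdb, hdc,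
    Real.norm_eq_abs, Real.norm_eq_abs, Real.norm_eq_abs, Real.norm_eq_abs,
    abs_of_pos ht₁.1, abs_of_pos ht₂.1,
    abs_of_pos (by linarith [ht₁.2] : (0:ℝ) < 1 - t₁),
    abs_of_pos (by linarith [ht₂.2] : (0:ℝ) < 1 - t₂)]
  have h1t₁ : (1:ℝ) - t₁ ≠ 0 := by linarith [ht₁.2]
  have h1t₂ : (1:ℝ) - t₂ ≠ 0 := by linarith [ht₂.2]
  field_simp
  linear_combination hkey
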